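/- Under the hypotheses of the power-balance theorem (skew-adjointness conditions for (E, Q, J, K), S symmetric, N skew-symmetric, x a continuously differentiable solution of E ẋ = ((J−R)Q − EK)x + (B−P)u on I = [t0, tf] with output y = (B+P)ᵀQx + (S+N)u), assume additionally that the dissipation matrix vanishes identically, i.e. Q(t)ᵀ*R(t)*Q(t) = 0, Q(t)ᵀ*P(t) = 0 and S(t) = 0 for all t ∈ I. Then the Hamiltonian evolves according to exact power balance: for all t0 ≤ s ≤ t ≤ tf, (1/2)⟪x(t), (Q(t)ᵀ*E(t)) ⬝ x(t)⟫ − (1/2)⟪x(s), (Q(s)ᵀ*E(s)) ⬝ x(s)⟫ = ∫_s^t ⟪u(τ), y(τ)⟫ dτ. -/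

import Mathlib

open Matrix Set

/-- `M'` is the entrywise derivative of the matrix-valued function `M` at `t`. -/
def MatHasDerivAt {α β : Type*} (M M' : ℝ → Matrix α β ℝ) (t : ℝ) : Prop :=
  ∀ i j, HasDerivAt (fun s => M s i j) (M' t i j) t

lemma hasDerivAt_quadForm {n : ℕ} (M M' : ℝ → Matrix (Fin n) (Fin n) ℝ)
    (x : ℝ → Fin n → ℝ) (x' : Fin n → ℝ) (t : ℝ)
    (hM : MatHasDerivAt M M' t) (hx : HasDerivAt x x' t) :
    HasDerivAt (fun s => x s ⬝ᵥ M s *ᵥ x s)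
      (x' ⬝ᵥ M t *ᵥ x t + x t ⬝ᵥ M' t *ᵥ x t + x t ⬝ᵥ M t *ᵥ x') t := by
  have hxi := hasDerivAt_pi.mp hx
  have key : ∀ i : Fin n, HasDerivAt (fun s => x s i * (M s *ᵥ x s) i)
      (x' i * (M t *ᵥ x t) i + x t i * ((M' t *ᵥ x t) i + (M t *ᵥ x') i)) t := by
    intro i
    have hinner : HasDerivAt (fun s => (M s *ᵥ x s) i)
        ((M' t *ᵥ x t) i + (M t *ᵥ x') i) t := by
      simp only [mulVec, dotProduct, ← Finset.sum_add_distrib]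
      exact HasDerivAt.fun_sum fun j _ => ((hM i j).mul (hxi j))
    exact (hxi i).mul hinner
  have h := HasDerivAt.fun_sum (fun i (_ : i ∈ Finset.univ) => key i)
  have heq : (fun s => x s ⬝ᵥ M s *ᵥ x s)
      = fun s => ∑ i, x s i * (M s *ᵥ x s) i := by
    funext s; simp [dotProduct]
  rw [heq]
  refine h.congr_deriv ?_
  simp only [dotProduct, Finset.sum_add_distrib, mul_add]
  ring

lemma dot_swap {k l : ℕ} (a : Fin k → ℝ) (M : Matrix (Fin k) (Fin l) ℝ) (b : Fin l → ℝ) :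
    a ⬝ᵥ M *ᵥ b = b ⬝ᵥ Mᵀ *ᵥ a := by
  rw [dotProduct_mulVec, mulVec_transpose, dotProduct_comm]

lemma contOn_dot {k : ℕ} {v w : ℝ → Fin k → ℝ} {s : Set ℝ}
    (hv : ContinuousOn v s) (hw : ContinuousOn w s) :
    ContinuousOn (fun t => v t ⬝ᵥ w t) s := by
  simp only [dotProduct]
  exact continuousOn_finset_sum Finset.univ fun i _ =>
    (((continuous_apply i).comp_continuousOn hv).mul ((continuous_apply i).comp_continuousOn hw))

lemma contOn_mulVec {k l : ℕ} {A : ℝ → Matrix (Fin k) (Fin l) ℝ} {v : ℝ → Fin l → ℝ} {s : Set ℝ}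
    (hA : ContinuousOn A s) (hv : ContinuousOn v s) :
    ContinuousOn (fun t => A t *ᵥ v t) s := by
  apply continuousOn_pi.2; intro i
  simp only [mulVec, dotProduct]
  exact continuousOn_finset_sum Finset.univ fun j _ =>
    (((continuous_apply_apply i j).comp_continuousOn hA).mul
      ((continuous_apply j).comp_continuousOn hv) : ContinuousOn (fun y => A y i j * v y j) s)

lemma contOn_transpose {k l : ℕ} {A : ℝ → Matrix (Fin k) (Fin l) ℝ} {s : Set ℝ}
    (hA : ContinuousOn A s) : ContinuousOn (fun t => (A t)ᵀ) s := by
  apply continuousOn_pi.2; intro i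
  apply continuousOn_pi.2; intro j
  exact (continuous_apply_apply j i).comp_continuousOn hA

lemma contOn_mul {k l p : ℕ} {A : ℝ → Matrix (Fin k) (Fin l) ℝ}
    {C : ℝ → Matrix (Fin l) (Fin p) ℝ} {s : Set ℝ}
    (hA : ContinuousOn A s) (hC : ContinuousOn C s) :
    ContinuousOn (fun t => A t * C t) s := by
  apply continuousOn_pi.2; intro i
  apply continuousOn_pi.2; intro j
  simp only [Matrix.mul_apply]
  exact continuousOn_finset_sum Finset.univ fun q _ =>
    (((continuous_apply_apply i q).comp_continuousOn hA).mul
      ((continuous_apply_apply q j).comp_continuousOn hC))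

/-- Power balance for a linear time-varying port-Hamiltonian descriptor system:
if the dissipation matrix vanishes identically, the Hamiltonian obeys exact power balance. -/
theorem pHDAE_exact_power_balance
    (n m : ℕ) (t0 tf : ℝ) (htf : t0 ≤ tf)
    (E Q J R K : ℝ → Matrix (Fin n) (Fin n) ℝ)
    (B P : ℝ → Matrix (Fin n) (Fin m) ℝ)
    (S N : ℝ → Matrix (Fin m) (Fin m) ℝ)
    (hEc : ContinuousOn E (Set.Icc t0 tf)) (hQc : ContinuousOn Q (Set.Icc t0 tf))
    (hJc : ContinuousOn J (Set.Icc t0 tf)) (hRc : ContinuousOn R (Set.Icc t0 tf))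
    (hKc : ContinuousOn K (Set.Icc t0 tf)) (hBc : ContinuousOn B (Set.Icc t0 tf))
    (hPc : ContinuousOn P (Set.Icc t0 tf)) (hSc : ContinuousOn S (Set.Icc t0 tf))
    (hNc : ContinuousOn N (Set.Icc t0 tf))
    (hSsym : ∀ t ∈ Set.Icc t0 tf, (S t)ᵀ = S t)
    (hNskew : ∀ t ∈ Set.Icc t0 tf, (N t)ᵀ = -N t)
    (hsym : ∀ t ∈ Set.Icc t0 tf, (Q t)ᵀ * E t = (E t)ᵀ * Q t)
    (hQE : ∀ t ∈ Set.Icc t0 tf,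
      MatHasDerivAt (fun s => (Q s)ᵀ * E s)
        (fun s => (Q s)ᵀ * (E s * K s - J s * Q s) +
          (E s * K s - J s * Q s)ᵀ * Q s) t)
    (u : ℝ → Fin m → ℝ) (huc : ContinuousOn u (Set.Icc t0 tf))
    (x x' : ℝ → Fin n → ℝ)
    (hx : ∀ t ∈ Set.Icc t0 tf, HasDerivAt x (x' t) t)
    (hx'c : ContinuousOn x' (Set.Icc t0 tf))
    (hode : ∀ t ∈ Set.Icc t0 tf, E t *ᵥ x' t =
      ((J t - R t) * Q t - E t * K t) *ᵥ x t + (B t - P t) *ᵥ u t)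
    (y : ℝ → Fin m → ℝ)
    (hy : ∀ t ∈ Set.Icc t0 tf,
      y t = ((B t + P t)ᵀ * Q t) *ᵥ x t + (S t + N t) *ᵥ u t)
    (hR0 : ∀ t ∈ Set.Icc t0 tf, (Q t)ᵀ * R t * Q t = 0)
    (hP0 : ∀ t ∈ Set.Icc t0 tf, (Q t)ᵀ * P t = 0)
    (hS0 : ∀ t ∈ Set.Icc t0 tf, S t = 0) :
    ∀ s t : ℝ, t0 ≤ s → s ≤ t → t ≤ tf →
      (1 / 2 : ℝ) * (x t ⬝ᵥ ((Q t)ᵀ * E t) *ᵥ x t) -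
        (1 / 2 : ℝ) * (x s ⬝ᵥ ((Q s)ᵀ * E s) *ᵥ x s) =
        ∫ τ in s..t, u τ ⬝ᵥ y τ := by
  intro s t hs hst hte
  have hsub : Set.uIcc s t ⊆ Set.Icc t0 tf := by
    rw [Set.uIcc_of_le hst]
    exact Set.Icc_subset_Icc hs hte
  -- pointwise derivative of the Hamiltonian
  have hder : ∀ τ ∈ Set.Icc t0 tf,
      HasDerivAt (fun σ => (1 / 2 : ℝ) * (x σ ⬝ᵥ ((Q σ)ᵀ * E σ) *ᵥ x σ))
        (u τ ⬝ᵥ y τ) τ := by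
    intro τ hτ
    have h1 := hasDerivAt_quadForm (fun σ => (Q σ)ᵀ * E σ)
      (fun σ => (Q σ)ᵀ * (E σ * K σ - J σ * Q σ) + (E σ * K σ - J σ * Q σ)ᵀ * Q σ)
      x (x' τ) τ (hQE τ hτ) (hx τ hτ)
    have h2 := h1.const_mul (1 / 2 : ℝ)
    have hval : u τ ⬝ᵥ y τ =
        (1 / 2 : ℝ) * (x' τ ⬝ᵥ ((Q τ)ᵀ * E τ) *ᵥ x τ +
          x τ ⬝ᵥ ((Q τ)ᵀ * (E τ * K τ - J τ * Q τ) +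
            (E τ * K τ - J τ * Q τ)ᵀ * Q τ) *ᵥ x τ +
          x τ ⬝ᵥ ((Q τ)ᵀ * E τ) *ᵥ x' τ) := by
      -- term1 = term3
      have hsymM : ((Q τ)ᵀ * E τ)ᵀ = (Q τ)ᵀ * E τ := by
        rw [transpose_mul, transpose_transpose, ← hsym τ hτ]
      have ht1 : x' τ ⬝ᵥ ((Q τ)ᵀ * E τ) *ᵥ x τ = x τ ⬝ᵥ ((Q τ)ᵀ * E τ) *ᵥ x' τ := by
        rw [dot_swap, hsymM]
      -- term3 via the ODE
      have ht3 : x τ ⬝ᵥ ((Q τ)ᵀ * E τ) *ᵥ x' τ =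
          x τ ⬝ᵥ ((Q τ)ᵀ * ((J τ - R τ) * Q τ - E τ * K τ)) *ᵥ x τ +
            x τ ⬝ᵥ ((Q τ)ᵀ * (B τ - P τ)) *ᵥ u τ := by
        rw [← mulVec_mulVec, hode τ hτ, mulVec_add, dotProduct_add,
          mulVec_mulVec, mulVec_mulVec]
      -- term2
      have ht2 : x τ ⬝ᵥ ((Q τ)ᵀ * (E τ * K τ - J τ * Q τ) +
            (E τ * K τ - J τ * Q τ)ᵀ * Q τ) *ᵥ x τ =
          2 * (x τ ⬝ᵥ ((Q τ)ᵀ * (E τ * K τ - J τ * Q τ)) *ᵥ x τ) := by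
        rw [add_mulVec, dotProduct_add, two_mul]
        congr 1
        rw [dot_swap]
        congr 1
        rw [transpose_mul, transpose_transpose]
      -- the quadratic parts cancel
      have hcancel : x τ ⬝ᵥ ((Q τ)ᵀ * ((J τ - R τ) * Q τ - E τ * K τ)) *ᵥ x τ +
          x τ ⬝ᵥ ((Q τ)ᵀ * (E τ * K τ - J τ * Q τ)) *ᵥ x τ = 0 := by
        rw [← dotProduct_add, ← add_mulVec, ← mul_add]
        have : (J τ - R τ) * Q τ - E τ * K τ + (E τ * K τ - J τ * Q τ)
            = -(R τ * Q τ) := by noncomm_ring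
        rw [this, mul_neg, ← mul_assoc, hR0 τ hτ]
        simp
      -- the output
      have hyv : u τ ⬝ᵥ y τ = x τ ⬝ᵥ ((Q τ)ᵀ * (B τ - P τ)) *ᵥ u τ := by
        rw [hy τ hτ, hS0 τ hτ, zero_add, dotProduct_add]
        have hN : u τ ⬝ᵥ N τ *ᵥ u τ = 0 := by
          have := dot_swap (u τ) (N τ) (u τ)
          rw [hNskew τ hτ, neg_mulVec, dotProduct_neg] at this
          linarith
        rw [hN, add_zero, dot_swap, transpose_mul, transpose_transpose]
        have : (Q τ)ᵀ * (B τ + P τ) = (Q τ)ᵀ * (B τ - P τ) := by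
          rw [Matrix.mul_add, Matrix.mul_sub, hP0 τ hτ]; simp
        rw [this]
      rw [hyv, ht1, ht3, ht2]
      linarith [hcancel]
    rw [hval]
    exact h2
  -- continuity of the integrand
  have hxc : ContinuousOn x (Set.Icc t0 tf) := fun τ hτ =>
    (hx τ hτ).continuousAt.continuousWithinAt
  have hyc : ContinuousOn y (Set.Icc t0 tf) := by
    have : ContinuousOn (fun τ => ((B τ + P τ)ᵀ * Q τ) *ᵥ x τ + (S τ + N τ) *ᵥ u τ)
        (Set.Icc t0 tf) :=
      (contOn_mulVec (contOn_mul (contOn_transpose (hBc.add hPc)) hQc) hxc).add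
        (contOn_mulVec (hSc.add hNc) huc)
    exact this.congr fun τ hτ => hy τ hτ
  have hint : IntervalIntegrable (fun τ => u τ ⬝ᵥ y τ) MeasureTheory.volume s t :=
    ((contOn_dot huc hyc).mono hsub).intervalIntegrable
  have := intervalIntegral.integral_eq_sub_of_hasDerivAt
    (fun τ hτ => hder τ (hsub hτ)) hint
  linarith [this]
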